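/- For all integers $d \geq 2$ and $n \geq 2$, there exist a totally real number field $K$ with $[K : \mathbb{Q}] = d$ and elements $f, g \in \mathcal{O}_K$ with $g \neq 0$ such that the $n \times n$ matrix $f I_n + g(J_n - I_n)$, with diagonal entries $f$ and all off-diagonal entries $g$, is invertible over $\mathcal{O}_K$, i.e., lies in $\mathrm{GL}_n(\mathcal{O}_K)$. -/

import Mathlib

open NumberField

/-- The `n × n` matrix over `R` with all diagonal entries equal to `f` and all
off-diagonal entries equal to `g`, i.e. `f • I + g • (J - I)`. -/
def diagOffMatrix (R : Type*) [CommRing R] (n : ℕ) (f g : R) : Matrix (Fin n) (Fin n) R :=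
  Matrix.of fun i j => if i = j then f else g

open Polynomial Finset IntermediateField




lemma diagOffMatrix_mul {R : Type*} [CommRing R] (n : ℕ) (f g f₂ g₂ : R) :
    diagOffMatrix R n f g * diagOffMatrix R n f₂ g₂ =
      diagOffMatrix R n (f * f₂ + (n - 1 : ℕ) * (g * g₂))
        (f * g₂ + g * f₂ + (n - 2 : ℕ) * (g * g₂)) := by
  ext i j
  simp only [diagOffMatrix, Matrix.mul_apply, Matrix.of_apply]
  set t : Fin n → R := fun k => (if i = k then f else g) * (if k = j then f₂ else g₂) with ht
  by_cases hij : i = j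
  · subst hij
    have h1 : ∑ k, t k = t i + ∑ k ∈ Finset.univ.erase i, t k :=
      (Finset.add_sum_erase _ _ (Finset.mem_univ i)).symm
    have h2 : ∑ k ∈ Finset.univ.erase i, t k = ∑ _k ∈ Finset.univ.erase i, g * g₂ := by
      refine Finset.sum_congr rfl fun k hk => ?_
      have hk' := (Finset.mem_erase.mp hk).1
      rw [ht]
      simp only [if_neg (fun h : i = k => hk' h.symm), if_neg hk']
    have h3 : t i = f * f₂ := by rw [ht]; simp
    rw [if_pos rfl, h1, h2, h3, Finset.sum_const,
      Finset.card_erase_of_mem (Finset.mem_univ i), Finset.card_univ, Fintype.card_fin,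
      nsmul_eq_mul]
  · have hji : j ∈ Finset.univ.erase i := Finset.mem_erase.mpr ⟨Ne.symm hij, Finset.mem_univ j⟩
    have h1 : ∑ k, t k = t i + (t j + ∑ k ∈ (Finset.univ.erase i).erase j, t k) := by
      rw [Finset.add_sum_erase _ _ hji, Finset.add_sum_erase _ _ (Finset.mem_univ i)]
    have h2 : ∑ k ∈ (Finset.univ.erase i).erase j, t k
        = ∑ _k ∈ (Finset.univ.erase i).erase j, g * g₂ := by
      refine Finset.sum_congr rfl fun k hk => ?_
      have hk1 := (Finset.mem_erase.mp hk).1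
      have hk2 := (Finset.mem_erase.mp (Finset.mem_erase.mp hk).2).1
      rw [ht]
      simp only [if_neg (fun h : i = k => hk2 h.symm), if_neg hk1]
    have h3 : t i = f * g₂ := by rw [ht]; simp [hij]
    have h4 : t j = g * f₂ := by rw [ht]; simp [hij]
    rw [if_neg hij, h1, h2, h3, h4, Finset.sum_const,
      Finset.card_erase_of_mem hji, Finset.card_erase_of_mem (Finset.mem_univ i),
      Finset.card_univ, Fintype.card_fin, nsmul_eq_mul, Nat.sub_sub]
    ring

/-- Node points. -/
def tbAux (n k : ℕ) : ℤ := if k = 0 then 1 else 1 - n - 4 * ((k : ℤ) - 1)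

/-- Test points. -/
def tpAux (n m : ℕ) : ℤ :=
  if m = 0 then tbAux n 0 + 2 else if m % 2 = 1 then tbAux n (m - 1) else tbAux n (m - 1) - 2

lemma tpAux_zero (n : ℕ) : tpAux n 0 = tbAux n 0 + 2 := rfl

lemma tpAux_odd {n m : ℕ} (h : m % 2 = 1) : tpAux n m = tbAux n (m - 1) := by
  unfold tpAux
  rw [if_neg (show ¬ m = 0 by omega), if_pos h]

lemma tpAux_even {n m : ℕ} (h0 : m ≠ 0) (h : m % 2 = 0) :
    tpAux n m = tbAux n (m - 1) - 2 := by
  unfold tpAux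
  rw [if_neg h0, if_neg (show ¬ m % 2 = 1 by omega)]

lemma tbAux_lt {n : ℕ} (hn : 2 ≤ n) {j k : ℕ} (h : j < k) :
    tbAux n k + 2 * ((k : ℤ) - j) ≤ tbAux n j := by
  unfold tbAux
  have hn' : (2 : ℤ) ≤ n := by exact_mod_cast hn
  have hjk : (j : ℤ) < k := by exact_mod_cast h
  rw [if_neg (by omega : ¬ k = 0)]
  by_cases hj : j = 0
  · subst hj
    rw [if_pos rfl]
    simp only [Nat.cast_zero]
    have hk1 : (1:ℤ) ≤ k := by exact_mod_cast Nat.one_le_iff_ne_zero.mpr (by omega)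
    omega
  · rw [if_neg hj]
    omega

lemma tbAux_lt4 {n j k : ℕ} (h1 : 1 ≤ j) (h : j < k) :
    tbAux n k + 4 ≤ tbAux n j := by
  unfold tbAux
  have hj : (1 : ℤ) ≤ j := by exact_mod_cast h1
  have hjk : (j : ℤ) < k := by exact_mod_cast h
  rw [if_neg (by omega : ¬ k = 0), if_neg (by omega : ¬ j = 0)]
  omega

lemma tbAux_anti {n : ℕ} (hn : 2 ≤ n) {j k : ℕ} (h : j < k) : tbAux n k < tbAux n j := by
  have h1 := tbAux_lt hn h
  have h2 : (j:ℤ) < k := by exact_mod_cast h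
  omega

lemma tbAux_le2 {n : ℕ} (hn : 2 ≤ n) {j k : ℕ} (h : j < k) : tbAux n k + 2 ≤ tbAux n j := by
  have h1 := tbAux_lt hn h
  have h2 : (j:ℤ) < k := by exact_mod_cast h
  omega

lemma tpAux_anti {n : ℕ} (hn : 2 ≤ n) (m : ℕ) : tpAux n (m + 1) < tpAux n m := by
  have h2 : (m + 1) - 1 = m := by omega
  rcases Nat.eq_zero_or_pos m with rfl | hm
  · rw [tpAux_zero, tpAux_odd (by norm_num)]
    norm_num [tbAux]
  · rcases Nat.mod_two_eq_zero_or_one m with he | ho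
    · -- m even positive, m+1 odd
      rw [tpAux_even (by omega) he, tpAux_odd (by omega), h2]
      have := tbAux_lt4 (n := n) (j := m - 1) (k := m) (by omega) (by omega)
      omega
    · -- m odd, m+1 even
      rw [tpAux_odd ho, tpAux_even (by omega) (by omega), h2]
      have := tbAux_anti hn (show m - 1 < m by omega)
      omega

lemma tpAux_prod_big {n d : ℕ} (hn : 2 ≤ n) {m : ℕ} (hm : m ≤ d) (hme : m % 2 = 0) :
    (2 : ℤ) ^ d ≤ ∏ k ∈ Finset.range d, (tpAux n m - tbAux n k) := by
  have key1 : ∀ k < m, tbAux n k - tpAux n m ≥ 2 := by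
    intro k hk
    have hm0 : m ≠ 0 := by omega
    rw [tpAux_even hm0 hme]
    rcases eq_or_lt_of_le (show k ≤ m - 1 by omega) with rfl | hlt
    · omega
    · have := tbAux_le2 hn hlt
      omega
  have key2 : ∀ k, m ≤ k → tpAux n m - tbAux n k ≥ 2 := by
    intro k hk
    rcases Nat.eq_zero_or_pos m with rfl | hm0
    · rw [tpAux_zero]
      rcases Nat.eq_zero_or_pos k with rfl | hk0
      · omega
      · have := tbAux_anti hn hk0
        omega
    · rw [tpAux_even (by omega) hme]
      have := tbAux_lt4 (n := n) (j := m - 1) (k := k) (by omega) (by omega)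
      omega
  rw [← Finset.prod_range_mul_prod_Ico _ hm]
  have e1 : ∏ k ∈ Finset.range m, (tpAux n m - tbAux n k)
      = ∏ k ∈ Finset.range m, ((-1) * (tbAux n k - tpAux n m)) := by
    refine Finset.prod_congr rfl fun k _ => by ring
  have e2 : ∏ k ∈ Finset.range m, ((-1 : ℤ) * (tbAux n k - tpAux n m))
      = ∏ k ∈ Finset.range m, (tbAux n k - tpAux n m) := by
    rw [Finset.prod_mul_distrib, Finset.prod_const, Finset.card_range,
      show ((-1 : ℤ)) ^ m = 1 from (Nat.even_iff.mpr hme).neg_one_pow, one_mul]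
  have b1 : (2 : ℤ) ^ m ≤ ∏ k ∈ Finset.range m, (tbAux n k - tpAux n m) := by
    calc (2:ℤ)^m = ∏ _k ∈ Finset.range m, (2:ℤ) := by
          rw [Finset.prod_const, Finset.card_range]
      _ ≤ _ := Finset.prod_le_prod (fun k _ => by norm_num)
          (fun k hk => key1 k (Finset.mem_range.mp hk))
  have b2 : (2 : ℤ) ^ (d - m) ≤ ∏ k ∈ Finset.Ico m d, (tpAux n m - tbAux n k) := by
    calc (2:ℤ)^(d-m) = ∏ _k ∈ Finset.Ico m d, (2:ℤ) := by
          rw [Finset.prod_const, Nat.card_Ico]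
      _ ≤ _ := Finset.prod_le_prod (fun k _ => by norm_num)
          (fun k hk => key2 k (Finset.mem_Ico.mp hk).1)
  rw [e1, e2]
  calc (2:ℤ)^d = 2^m * 2^(d-m) := by rw [← pow_add]; congr 1; omega
    _ ≤ _ := mul_le_mul b1 b2 (by positivity) (le_trans (by positivity) b1)

lemma tpAux_prod_zero {n d : ℕ} {m : ℕ} (hm : m ≤ d) (hmo : m % 2 = 1) :
    ∏ k ∈ Finset.range d, (tpAux n m - tbAux n k) = 0 := by
  apply Finset.prod_eq_zero (Finset.mem_range.mpr (show m - 1 < d by omega))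
  rw [tpAux_odd hmo, sub_self]

lemma exists_root_between {n : ℕ} (hn : 2 ≤ n) {d m : ℕ} (hm : m < d) :
    ∃ x : ℝ, x ∈ Set.Ioo ((tpAux n (m+1) : ℝ)) ((tpAux n m : ℝ)) ∧
      (∏ k ∈ Finset.range d, (x - (tbAux n k : ℝ))) = 1 := by
  set G : ℝ → ℝ := fun x => ∏ k ∈ Finset.range d, (x - (tbAux n k : ℝ)) with hG
  have hGc : Continuous G :=
    continuous_finset_prod _ fun i _ => continuous_id.sub continuous_const
  have hcast : ∀ m' : ℕ, G ((tpAux n m' : ℤ) : ℝ)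
      = ((∏ k ∈ Finset.range d, (tpAux n m' - tbAux n k) : ℤ) : ℝ) := by
    intro m'
    rw [hG]
    push_cast
    rfl
  have hab : ((tpAux n (m+1) : ℤ) : ℝ) ≤ ((tpAux n m : ℤ) : ℝ) := by
    exact_mod_cast (tpAux_anti hn m).le
  have h2d : (1 : ℝ) < ((2:ℤ)^d : ℤ) := by
    have : (1:ℤ) < 2^d := by
      calc (1:ℤ) < 2 := one_lt_two
        _ ≤ 2^d := le_self_pow₀ one_le_two (by omega)
    exact_mod_cast this
  rcases Nat.mod_two_eq_zero_or_one m with he | ho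
  · -- G(tp (m+1)) = 0, G(tp m) ≥ 2^d
    have hva : G ((tpAux n (m+1) : ℤ) : ℝ) = 0 := by
      rw [hcast, tpAux_prod_zero (by omega) (by omega)]; norm_num
    have hvb : (1:ℝ) < G ((tpAux n m : ℤ) : ℝ) := by
      rw [hcast]
      refine lt_of_lt_of_le h2d ?_
      exact_mod_cast tpAux_prod_big hn (le_of_lt hm) he
    have := intermediate_value_Ioo hab (hGc.continuousOn)
    have hmem : (1:ℝ) ∈ Set.Ioo (G ((tpAux n (m+1) : ℤ) : ℝ)) (G ((tpAux n m : ℤ) : ℝ)) := by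
      rw [hva]; exact ⟨one_pos, hvb⟩
    obtain ⟨x, hx, hx1⟩ := this hmem
    exact ⟨x, hx, hx1⟩
  · -- G(tp (m+1)) ≥ 2^d, G(tp m) = 0
    have hvb : G ((tpAux n m : ℤ) : ℝ) = 0 := by
      rw [hcast, tpAux_prod_zero (le_of_lt hm) ho]; norm_num
    have hva : (1:ℝ) < G ((tpAux n (m+1) : ℤ) : ℝ) := by
      rw [hcast]
      refine lt_of_lt_of_le h2d ?_
      exact_mod_cast tpAux_prod_big hn (by omega) (by omega)
    have := intermediate_value_Ioo' hab (hGc.continuousOn)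
    have hmem : (1:ℝ) ∈ Set.Ioo (G ((tpAux n m : ℤ) : ℝ)) (G ((tpAux n (m+1) : ℤ) : ℝ)) := by
      rw [hvb]; exact ⟨one_pos, hva⟩
    obtain ⟨x, hx, hx1⟩ := this hmem
    exact ⟨x, hx, hx1⟩

/-- The polynomial `∏ (X - b_k) - 1`. -/
noncomputable def polyAux (n d : ℕ) : ℤ[X] :=
  (∏ k ∈ Finset.range d, (X - C (tbAux n k))) - 1

lemma polyAux_monic {n d : ℕ} (hd : 1 ≤ d) : (polyAux n d).Monic := by
  have hQm : (∏ k ∈ Finset.range d, (X - C (tbAux n k))).Monic :=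
    monic_prod_of_monic _ _ fun k _ => monic_X_sub_C _
  have hQdeg : (∏ k ∈ Finset.range d, (X - C (tbAux n k))).natDegree = d := by
    rw [natDegree_prod_of_monic _ _ fun k _ => monic_X_sub_C _]
    simp only [natDegree_X_sub_C, Finset.sum_const, Finset.card_range, smul_eq_mul, mul_one]
  have hdeg : ((-1 : ℤ[X])).degree < (∏ k ∈ Finset.range d, (X - C (tbAux n k))).degree := by
    rw [Polynomial.degree_eq_natDegree hQm.ne_zero, hQdeg]
    refine lt_of_le_of_lt (degree_neg (1 : ℤ[X]) ▸ degree_one_le) ?_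
    exact_mod_cast Nat.zero_lt_of_lt hd
  have := hQm.add_of_left hdeg
  rwa [← sub_eq_add_neg] at this

lemma polyAux_natDegree {n d : ℕ} : (polyAux n d).natDegree = d := by
  unfold polyAux
  rw [show (1 : ℤ[X]) = C 1 from rfl, natDegree_sub_C,
    natDegree_prod_of_monic _ _ fun k _ => monic_X_sub_C _]
  simp only [natDegree_X_sub_C, Finset.sum_const, Finset.card_range, smul_eq_mul, mul_one]

lemma polyAux_eval_tb {n d : ℕ} {j : ℕ} (hj : j < d) :
    (polyAux n d).eval (tbAux n j) = -1 := by
  unfold polyAux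
  rw [eval_sub, eval_prod, Finset.prod_eq_zero (Finset.mem_range.mpr hj)]
  · simp
  · simp

lemma polyAux_aeval_real {n d : ℕ} (x : ℝ) :
    (Polynomial.aeval x) (polyAux n d) = (∏ k ∈ Finset.range d, (x - (tbAux n k : ℝ))) - 1 := by
  unfold polyAux
  rw [map_sub, map_prod, map_one]
  congr 1
  refine Finset.prod_congr rfl fun k _ => ?_
  rw [map_sub, aeval_X, aeval_C]
  norm_num

lemma polyAux_irreducible {n d : ℕ} (hn : 2 ≤ n) (hd : 2 ≤ d) :
    Irreducible (polyAux n d) := by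
  have hPm : (polyAux n d).Monic := polyAux_monic (by omega)
  constructor
  · intro hu
    have := natDegree_eq_zero_of_isUnit hu
    rw [polyAux_natDegree] at this
    omega
  · intro G H hGH
    by_contra hcon
    push_neg at hcon
    obtain ⟨hG, hH⟩ := hcon
    have hG0 : G ≠ 0 := by
      rintro rfl
      exact hPm.ne_zero (by simpa using hGH)
    have hH0 : H ≠ 0 := by
      rintro rfl
      exact hPm.ne_zero (by simpa using hGH)
    have hlc : G.leadingCoeff * H.leadingCoeff = 1 := by
      rw [← leadingCoeff_mul, ← hGH, hPm.leadingCoeff]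
    have hdeg : G.natDegree + H.natDegree = d := by
      rw [← natDegree_mul hG0 hH0, ← hGH, polyAux_natDegree]
    have hGd : G.natDegree ≠ 0 := by
      intro h0
      obtain ⟨c, hc⟩ := Polynomial.natDegree_eq_zero.mp h0
      apply hG
      rw [← hc]
      apply Polynomial.isUnit_C.mpr
      exact IsUnit.of_mul_eq_one _ (by rw [← hc, leadingCoeff_C] at hlc; exact hlc)
    have hHd : H.natDegree ≠ 0 := by
      intro h0
      obtain ⟨c, hc⟩ := Polynomial.natDegree_eq_zero.mp h0
      apply hH
      rw [← hc]
      apply Polynomial.isUnit_C.mpr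
      apply IsUnit.of_mul_eq_one G.leadingCoeff
      rw [← hc, leadingCoeff_C] at hlc
      linarith [hlc, mul_comm c G.leadingCoeff]
    -- G + H vanishes at all the (distinct) points tbAux n j, j < d
    have heval : ∀ j < d, (G + H).eval (tbAux n j) = 0 := by
      intro j hj
      have h1 : G.eval (tbAux n j) * H.eval (tbAux n j) = -1 := by
        rw [← eval_mul, ← hGH, polyAux_eval_tb hj]
      have hu : IsUnit (G.eval (tbAux n j)) :=
        isUnit_of_mul_isUnit_left (M := ℤ) (h1 ▸ (isUnit_one.neg))
      rcases Int.isUnit_iff.mp hu with h | h <;>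
        · rw [h] at h1
          rw [eval_add, h]
          omega
    have hinj : Set.InjOn (tbAux n) (Finset.range d) := by
      intro a ha b hb hab
      by_contra hne
      rcases Nat.lt_or_ge a b with h | h
      · exact absurd hab (ne_of_gt (tbAux_anti hn h))
      · exact absurd hab (ne_of_lt (tbAux_anti hn (by omega)))
    have hScard : ((Finset.range d).image (tbAux n)).card = d := by
      rw [Finset.card_image_of_injOn hinj, Finset.card_range]
    have hS : G + H = 0 := by
      apply eq_zero_of_natDegree_lt_card_of_eval_eq_zero' (G + H)
        ((Finset.range d).image (tbAux n))
      · intro i hi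
        obtain ⟨j, hj, rfl⟩ := Finset.mem_image.mp hi
        exact heval j (Finset.mem_range.mp hj)
      · rw [hScard]
        refine lt_of_le_of_lt (natDegree_add_le G H) (max_lt ?_ ?_) <;> omega
    have hHG : H = -G := by linear_combination hS
    rw [hHG] at hlc
    have := sq_nonneg G.leadingCoeff
    simp only [leadingCoeff_neg] at hlc
    nlinarith

lemma polyAux_real_roots {n d : ℕ} (hn : 2 ≤ n) (hd : 2 ≤ d) :
    (∃ α : ℝ, ∏ k ∈ Finset.range d, (α - (tbAux n k : ℝ)) = 1) ∧
      ∀ z : ℂ, (Polynomial.aeval z) (polyAux n d) = 0 → ∃ r : ℝ, z = (r : ℂ) := by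
  classical
  set xf : ℕ → ℝ := fun m => if h : m < d then (exists_root_between hn h).choose else 0 with hxf
  have hspec : ∀ m (h : m < d), xf m ∈ Set.Ioo ((tpAux n (m+1) : ℝ)) ((tpAux n m : ℝ)) ∧
      (∏ k ∈ Finset.range d, (xf m - (tbAux n k : ℝ))) = 1 := by
    intro m h
    rw [hxf]
    simp only [dif_pos h]
    exact (exists_root_between hn h).choose_spec
  have htp : StrictAnti (tpAux n) := strictAnti_nat_of_succ_lt (tpAux_anti hn)
  have hxinj : Set.InjOn xf (Finset.range d) := by
    have key : ∀ a b, a < b → b < d → xf b < xf a := by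
      intro a b hab hbd
      have h1 := (hspec b hbd).1
      have h2 := (hspec a (by omega)).1
      have h3 : ((tpAux n b : ℤ) : ℝ) ≤ ((tpAux n (a+1) : ℤ) : ℝ) := by
        exact_mod_cast Int.cast_le.mpr (htp.antitone (show a + 1 ≤ b by omega))
      calc xf b < _ := h1.2
        _ ≤ _ := h3
        _ < xf a := h2.1
    intro a ha b hb hab
    simp only [Finset.coe_range, Set.mem_Iio] at ha hb
    by_contra hne
    rcases Nat.lt_or_ge a b with h | h
    · exact absurd hab (ne_of_gt (key a b h hb))
    · exact absurd hab (ne_of_lt (key b a (by omega) ha))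
  refine ⟨⟨xf 0, (hspec 0 (by omega)).2⟩, ?_⟩
  -- now the complex root statement
  set Pr : Polynomial ℝ := (polyAux n d).map (algebraMap ℤ ℝ) with hPr
  have hPrm : Pr.Monic := (polyAux_monic (by omega)).map _
  have hPrdeg : Pr.natDegree = d := by
    rw [hPr, (polyAux_monic (by omega)).natDegree_map, polyAux_natDegree]
  have hroots : ∀ m < d, Pr.eval (xf m) = 0 := by
    intro m hm
    rw [hPr, Polynomial.eval_map, ← Polynomial.aeval_def, polyAux_aeval_real,
      (hspec m hm).2, sub_self]
  set s : Multiset ℝ := ((Finset.range d).image xf).val with hs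
  have hscard : Multiset.card s = d := by
    have : ((Finset.range d).image xf).card = d := by
      rw [Finset.card_image_of_injOn hxinj, Finset.card_range]
    rw [Finset.card_def] at this; exact this
  have hsle : s ≤ Pr.roots := by
    rw [Multiset.le_iff_subset ((Finset.range d).image xf).nodup]
    intro a ha
    obtain ⟨m, hm, rfl⟩ := Finset.mem_image.mp (Finset.mem_val.mp ha)
    rw [Polynomial.mem_roots hPrm.ne_zero]
    exact hroots m (Finset.mem_range.mp hm)
  have hdvd : (s.map fun a => Polynomial.X - Polynomial.C a).prod ∣ Pr :=
    (Multiset.prod_X_sub_C_dvd_iff_le_roots hPrm.ne_zero s).mpr hsle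
  obtain ⟨u, hu⟩ := hdvd
  have hmon : ∀ f ∈ s.map fun a => Polynomial.X - Polynomial.C a, f.Monic := by
    intro f hf
    obtain ⟨a, _, rfl⟩ := Multiset.mem_map.mp hf
    exact monic_X_sub_C a
  have hTm : (s.map fun a => Polynomial.X - Polynomial.C a).prod.Monic :=
    monic_multiset_prod_of_monic s _ fun a _ => monic_X_sub_C a
  have hTdeg : (s.map fun a => Polynomial.X - Polynomial.C a).prod.natDegree = d := by
    rw [natDegree_multiset_prod_of_monic (t := s.map fun a => Polynomial.X - Polynomial.C a)
      hmon, Multiset.map_map]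
    have he : (Multiset.map (Polynomial.natDegree ∘ fun a => Polynomial.X - Polynomial.C a) s)
        = Multiset.map (fun _ => 1) s :=
      Multiset.map_congr rfl fun a _ => natDegree_X_sub_C a
    rw [he, Multiset.map_const', Multiset.sum_replicate, hscard, smul_eq_mul, mul_one]
  have hu1 : u = 1 := by
    have hu0 : u ≠ 0 := by
      rintro rfl
      rw [mul_zero] at hu
      exact hPrm.ne_zero hu
    have hudeg : u.natDegree = 0 := by
      have := hPrdeg
      rw [hu, Polynomial.natDegree_mul hTm.ne_zero hu0, hTdeg] at this
      omega
    have hulc : u.leadingCoeff = 1 := by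
      have : Pr.leadingCoeff = _ := congrArg Polynomial.leadingCoeff hu
      rw [hPrm.leadingCoeff, Polynomial.leadingCoeff_mul, hTm.leadingCoeff, one_mul] at this
      exact this.symm
    rw [Polynomial.eq_C_of_natDegree_eq_zero hudeg] at hulc ⊢
    rw [Polynomial.leadingCoeff_C] at hulc
    rw [hulc, Polynomial.C_1]
  rw [hu1, mul_one] at hu
  -- now over ℂ
  intro z hz
  have hmapmap : (polyAux n d).map (algebraMap ℤ ℂ) = Pr.map (algebraMap ℝ ℂ) := by
    rw [hPr, Polynomial.map_map]
    exact congrArg (fun ρ : ℤ →+* ℂ => Polynomial.map ρ (polyAux n d)) (RingHom.ext_int _ _)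
  have hz' : Polynomial.eval z (Pr.map (algebraMap ℝ ℂ)) = 0 := by
    rw [← hmapmap, Polynomial.eval_map, ← Polynomial.aeval_def]
    exact hz
  rw [hu, Polynomial.map_multiset_prod, Multiset.map_map,
    Polynomial.eval_multiset_prod] at hz'
  have h0 := Multiset.prod_eq_zero_iff.mp hz'
  obtain ⟨b, hb, hb0⟩ := Multiset.mem_map.mp h0
  obtain ⟨a, ha, rfl⟩ := Multiset.mem_map.mp hb
  refine ⟨a, ?_⟩
  simp only [Function.comp_apply, Polynomial.map_sub, Polynomial.map_X, Polynomial.map_C,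
    Polynomial.eval_sub, Polynomial.eval_X, Polynomial.eval_C] at hb0
  have : z = algebraMap ℝ ℂ a := by linear_combination hb0
  simpa using this

set_option maxHeartbeats 1000000 in
set_option synthInstance.maxHeartbeats 200000 in
/-- For all `d ≥ 2` and `n ≥ 2` there exist a totally real number field `K` of degree `d`
and `f, g` in its ring of integers with `g ≠ 0` such that the `n × n` matrix with diagonal
entries `f` and off-diagonal entries `g` is invertible over `𝓞 K`. -/
theorem exists_totallyReal_and_invertible_diagOffMatrix (d n : ℕ) (hd : 2 ≤ d) (hn : 2 ≤ n) :
    ∃ K : IntermediateField ℚ ℂ, NumberField K ∧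
      (∀ φ : K →+* ℂ, NumberField.ComplexEmbedding.IsReal φ) ∧
      Module.finrank ℚ K = d ∧
      ∃ f g : 𝓞 K, g ≠ 0 ∧ IsUnit (diagOffMatrix (𝓞 K) n f g) := by
  obtain ⟨⟨αr, hαr⟩, hconj⟩ := polyAux_real_roots (n := n) (d := d) hn hd
  set α : ℂ := (αr : ℂ) with hα
  -- α is a root of polyAux over ℂ
  have hαz : (Polynomial.aeval α) (polyAux n d) = 0 := by
    rw [hα, show ((αr : ℂ)) = algebraMap ℝ ℂ αr from rfl,
      Polynomial.aeval_algebraMap_apply, polyAux_aeval_real, hαr, sub_self, map_zero]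
  set Pq : Polynomial ℚ := (polyAux n d).map (algebraMap ℤ ℚ) with hPq
  have hPm := polyAux_monic (n := n) (show 1 ≤ d by omega)
  have hPqm : Pq.Monic := hPm.map _
  have hPqirr : Irreducible Pq :=
    (Polynomial.Monic.irreducible_iff_irreducible_map_fraction_map hPm).mp
      (polyAux_irreducible hn hd)
  have hαq : (Polynomial.aeval α) Pq = 0 := by
    rw [hPq, Polynomial.aeval_map_algebraMap]; exact hαz
  have hint : IsIntegral ℚ α := ⟨Pq, hPqm, by rw [← Polynomial.aeval_def]; exact hαq⟩
  have hmin : minpoly ℚ α = Pq := (minpoly.eq_of_irreducible_of_monic hPqirr hαq hPqm).symm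
  haveI hfd : FiniteDimensional ℚ ℚ⟮α⟯ := IntermediateField.adjoin.finiteDimensional hint
  -- every ring hom ℚ⟮α⟯ →+* ℂ is real
  have hreal : ∀ φ : ℚ⟮α⟯ →+* ℂ, NumberField.ComplexEmbedding.IsReal φ := by
    intro φ
    set pb := IntermediateField.adjoin.powerBasis hint with hpb
    have hgenroot : (Polynomial.aeval (φ pb.gen)) (polyAux n d) = 0 := by
      have h1 : (Polynomial.aeval pb.gen) (minpoly ℚ pb.gen) = 0 := minpoly.aeval ℚ pb.gen
      have h2 : minpoly ℚ pb.gen = Pq := by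
        rw [hpb, IntermediateField.adjoin.powerBasis_gen]; exact (IntermediateField.minpoly_gen ℚ α).trans hmin
      have h3 := congrArg φ.toRatAlgHom h1
      rw [map_zero, ← Polynomial.aeval_algHom_apply, h2] at h3
      rw [← Polynomial.aeval_map_algebraMap ℚ, ← hPq]
      exact h3
    obtain ⟨r, hr⟩ := hconj _ hgenroot
    have hconjgen : (starRingEnd ℂ) (φ pb.gen) = φ pb.gen := by
      rw [hr, Complex.conj_ofReal]
    have hAlg : ((starRingEnd ℂ).comp φ).toRatAlgHom = φ.toRatAlgHom := by
      apply pb.algHom_ext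
      exact hconjgen
    rw [NumberField.ComplexEmbedding.isReal_iff]
    ext x
    exact DFunLike.congr_fun hAlg x
  refine ⟨ℚ⟮α⟯, ⟨⟩, hreal, ?_, ?_⟩
  · rw [IntermediateField.adjoin.finrank hint, hmin, hPq, hPm.natDegree_map, polyAux_natDegree]
  -- construct the unit matrix data in the ring of integers
  set gen := IntermediateField.AdjoinSimple.gen ℚ α with hgen
  have hgenmap : algebraMap ℚ⟮α⟯ ℂ gen = α := IntermediateField.AdjoinSimple.algebraMap_gen ℚ α
  have hintℤ : IsIntegral ℤ α := ⟨polyAux n d, hPm, by rw [← Polynomial.aeval_def]; exact hαz⟩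
  have hgenint : IsIntegral ℤ gen := by
    rw [← isIntegral_algebraMap_iff (algebraMap ℚ⟮α⟯ ℂ).injective, hgenmap]
    exact hintℤ
  set A : 𝓞 ℚ⟮α⟯ := ⟨gen, hgenint⟩ with hA
  set v : (𝓞 ℚ⟮α⟯) := (n : (𝓞 ℚ⟮α⟯)) with hv
  set R : (𝓞 ℚ⟮α⟯) := ∏ k ∈ Finset.Ico 2 d, (A - ((tbAux n k : ℤ) : (𝓞 ℚ⟮α⟯))) with hR
  set χ : (𝓞 ℚ⟮α⟯) →+* ℂ := (algebraMap ℚ⟮α⟯ ℂ).comp (algebraMap (𝓞 ℚ⟮α⟯) ℚ⟮α⟯) with hχ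
  have hχinj : Function.Injective χ :=
    (algebraMap ℚ⟮α⟯ ℂ).injective.comp NumberField.RingOfIntegers.coe_injective
  have hχA : χ A = α := by
    rw [hχ, RingHom.comp_apply, hA]
    exact hgenmap
  -- the real product identity, split off the first two factors
  have hr2 : (αr - 1) * ((αr + (n : ℝ) - 1) *
      ∏ k ∈ Finset.Ico 2 d, (αr - (tbAux n k : ℝ))) = 1 := by
    have h := hαr
    rw [← Finset.prod_range_mul_prod_Ico _ (show 2 ≤ d from hd),
      Finset.prod_range_succ, Finset.prod_range_one] at h
    have hb0 : tbAux n 0 = 1 := rfl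
    have hb1 : tbAux n 1 = 1 - n := by unfold tbAux; norm_num
    rw [hb0, hb1] at h
    push_cast at h ⊢
    linear_combination h
  have hc2 : ((αr : ℂ) - 1) * (((αr : ℂ) + (n : ℂ) - 1) *
      ∏ k ∈ Finset.Ico 2 d, ((αr : ℂ) - ((tbAux n k : ℤ) : ℂ))) = 1 := by
    exact_mod_cast hr2
  have hkey : (A - 1) * ((A + v - 1) * R) = 1 := by
    apply hχinj
    simp only [map_mul, map_sub, map_add, map_one, map_natCast, map_intCast, map_prod,
      hχA, hR, hv]
    exact hα ▸ hc2
  refine ⟨A, 1, one_ne_zero, ?_⟩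
  set g2 : (𝓞 ℚ⟮α⟯) := -(((A + v - 1) * R) * ((A - 1) * R)) with hg2
  set f2 : (𝓞 ℚ⟮α⟯) := (A + v - 1) * R + g2 with hf2
  have hcast1 : ((n - 1 : ℕ) : (𝓞 ℚ⟮α⟯)) = v - 1 := by
    rw [hv, Nat.cast_sub (show 1 ≤ n by omega), Nat.cast_one]
  have hcast2 : ((n - 2 : ℕ) : (𝓞 ℚ⟮α⟯)) = v - 2 := by
    rw [hv, Nat.cast_sub (show 2 ≤ n by omega), Nat.cast_two]
  have hMN : diagOffMatrix (𝓞 ℚ⟮α⟯) n A 1 * diagOffMatrix (𝓞 ℚ⟮α⟯) n f2 g2 = 1 := by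
    rw [diagOffMatrix_mul]
    have e1 : A * f2 + ((n - 1 : ℕ) : (𝓞 ℚ⟮α⟯)) * (1 * g2) = 1 := by
      rw [hcast1, hf2, hg2]
      linear_combination (1 - (A + v - 1) * R) * hkey
    have e2 : A * g2 + 1 * f2 + ((n - 2 : ℕ) : (𝓞 ℚ⟮α⟯)) * (1 * g2) = 0 := by
      rw [hcast2, hf2, hg2]
      linear_combination (-(A + v - 1) * R) * hkey
    rw [e1, e2]
    ext i j
    by_cases hij : i = j <;> simp [diagOffMatrix, Matrix.one_apply, hij]
  have hdet : (diagOffMatrix (𝓞 ℚ⟮α⟯) n A 1).det * (diagOffMatrix (𝓞 ℚ⟮α⟯) n f2 g2).det = 1 := by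
    rw [← Matrix.det_mul, hMN, Matrix.det_one]
  exact (Matrix.isUnit_iff_isUnit_det _).mpr (IsUnit.of_mul_eq_one _ hdet)
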